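/- arXiv:2108.03610 — 2 statements merged into one kernel-verified Lean document; each statement's English description precedes it below -/
import Mathlib

section
/- Let X be a topological space, x ∈ X, and let H be a subgroup of π₁(X, x). Then π_H^qs(X, x) = H · π₁^qs(X, x), the product of the subgroups H and π₁^qs(X, x) in π₁(X, x). -/
open unitInterval

noncomputable section

attribute [local instance] Path.Homotopic.setoid

variable {X Y : Type*} [TopologicalSpace X] [TopologicalSpace Y]

/-- `HClose f g` : the path `f` is homotopically close to the path `g` rel `∂I`:
for every partition `0 = t₀ < t₁ < ⋯ < tₙ = 1` and every sequence of open sets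
`U₁, …, Uₙ` with `g [tᵢ₋₁, tᵢ] ⊆ Uᵢ`, there is a path `γ`, homotopic to `f` rel `∂I`,
with `γ [tᵢ₋₁, tᵢ] ⊆ Uᵢ` and `γ tᵢ = g tᵢ` for all `i`. -/
def HClose {a b : X} (f g : Path a b) : Prop :=
  ∀ (n : ℕ) (t : Fin (n + 1) → I), t 0 = 0 → t (Fin.last n) = 1 → StrictMono t →
    ∀ U : Fin n → Set X, (∀ i, IsOpen (U i)) →
      (∀ i : Fin n, g '' Set.Icc (t i.castSucc) (t i.succ) ⊆ U i) →
      ∃ γ : Path a b,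
        (∀ i : Fin n, γ '' Set.Icc (t i.castSucc) (t i.succ) ⊆ U i) ∧
        (∀ i : Fin (n + 1), γ (t i) = g (t i)) ∧ γ.Homotopic f

/-- The class of a loop at `x` as an element of the fundamental group. -/
def pathClass {x : X} (f : Path x x) : FundamentalGroup X x :=
  FundamentalGroup.fromPath ⟦f⟧

/-- The `H`-quasi-small loop set `π_H^qs(X, x)`. -/
def qsSet (x : X) (H : Set (FundamentalGroup X x)) : Set (FundamentalGroup X x) :=
  { p | ∃ f h : Path x x, pathClass f = p ∧ pathClass h ∈ H ∧ HClose f h }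

/-- The quasi-small loop group `π₁^qs(X, x)`. -/
def qs (x : X) : Set (FundamentalGroup X x) :=
  qsSet x (⊥ : Subgroup (FundamentalGroup X x))

/-- The Spanier group of `(X, x)` with respect to the cover `𝒰`. -/
def spanierCover (x : X) (𝒰 : Set (Set X)) : Subgroup (FundamentalGroup X x) :=
  Subgroup.closure { p | ∃ (y : X) (u : Path x y) (v : Path y y) (U : Set X),
    U ∈ 𝒰 ∧ Set.range v ⊆ U ∧ p = pathClass ((u.trans v).trans u.symm) }

/-- The (unbased) Spanier group `π₁^sp(X, x)`. -/
def spanierGroup (x : X) : Subgroup (FundamentalGroup X x) :=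
  ⨅ (𝒰 : Set (Set X)) (_ : ∀ U ∈ 𝒰, IsOpen U) (_ : ⋃₀ 𝒰 = Set.univ), spanierCover x 𝒰

/-- The small generated subgroup `π₁^sg(X, x)`. -/
def smallGenerated (x : X) : Subgroup (FundamentalGroup X x) :=
  Subgroup.closure { p | ∃ (y : X) (β : Path x y) (α : Path y y),
    HClose α (Path.refl y) ∧ p = pathClass ((β.trans α).trans β.symm) }

/-- `X` is homotopically path Hausdorff relative to `H ⊆ π₁(X, x)`. -/
def HPHausdorffRel (x : X) (H : Set (FundamentalGroup X x)) : Prop :=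
  ∀ (y : X) (α β : Path x y), pathClass (α.trans β.symm) ∉ H →
    ∃ (n : ℕ) (t : Fin (n + 1) → I), t 0 = 0 ∧ t (Fin.last n) = 1 ∧ StrictMono t ∧
      ∃ U : Fin n → Set X, (∀ i, IsOpen (U i)) ∧
        (∀ i : Fin n, α '' Set.Icc (t i.castSucc) (t i.succ) ⊆ U i) ∧
        ∀ γ : Path x y, (∀ i : Fin n, γ '' Set.Icc (t i.castSucc) (t i.succ) ⊆ U i) →
          (∀ i : Fin (n + 1), γ (t i) = α (t i)) → pathClass (γ.trans β.symm) ∉ H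


section AuxLemmas

variable {X : Type*} [TopologicalSpace X]

lemma pathClass_congr' {x : X} {f g : Path x x} (h : f.Homotopic g) :
    pathClass f = pathClass g := by
  unfold pathClass; rw [Quotient.sound h]

lemma pathClass_one' {x : X} : pathClass (Path.refl x) = 1 := rfl

lemma pathClass_trans' {x : X} (f g : Path x x) :
    pathClass (f.trans g) = pathClass g * pathClass f := rfl

lemma pathClass_surj' {x : X} (p : FundamentalGroup X x) : ∃ f : Path x x, pathClass f = p := by
  obtain ⟨f, hf⟩ := Quotient.exists_rep
    (FundamentalGroup.toPath p)
  exact ⟨f, hf⟩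

lemma pathClass_mul_symm' {x : X} (h : Path x x) : pathClass h * pathClass h.symm = 1 := by
  rw [← pathClass_trans', ← pathClass_one' (x := x)]
  exact (pathClass_congr' ⟨Path.Homotopy.reflSymmTrans h⟩).symm

set_option maxHeartbeats 1000000 in
lemma HClose.transRight {a b d : X} {f g : Path a b} (hcl : HClose f g) (c : Path b d) :
    HClose (f.trans c) (g.trans c) := by
  intro n t ht0 htl hmono U hU hsub
  classical
  have hne : (Finset.univ.filter (fun i : Fin (n+1) => (1:ℝ)/2 ≤ (t i : ℝ))).Nonempty :=
    ⟨Fin.last n, Finset.mem_filter.mpr ⟨Finset.mem_univ _, by rw [htl]; norm_num⟩⟩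
  set k := Finset.min' _ hne with hkdef
  have hk_half : (1:ℝ)/2 ≤ (t k : ℝ) := (Finset.mem_filter.mp (Finset.min'_mem _ hne)).2
  have hk_min : ∀ i : Fin (n+1), (1:ℝ)/2 ≤ (t i : ℝ) → k ≤ i := fun i hi =>
    Finset.min'_le _ i (Finset.mem_filter.mpr ⟨Finset.mem_univ _, hi⟩)
  have hlt : ∀ i : Fin (n+1), i < k → (t i : ℝ) < 1/2 := by
    intro i hik
    by_contra hc
    push_neg at hc
    exact absurd (hk_min i hc) (not_le.2 hik)
  have hk0 : k ≠ 0 := by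
    intro h
    rw [h, ht0] at hk_half
    norm_num at hk_half
  set m := k.val with hmdef
  have hmn : m ≤ n := Nat.lt_succ_iff.mp k.isLt
  have hle' : m + 1 ≤ n + 1 := by omega
  have hmem : ∀ p : I, min (2 * (p:ℝ)) 1 ∈ Set.Icc (0:ℝ) 1 :=
    fun p => ⟨le_min (by have := p.2.1; linarith) zero_le_one, min_le_right _ _⟩
  set s : Fin (m+1) → I := fun j => ⟨min (2 * (t (Fin.castLE hle' j) : ℝ)) 1, hmem _⟩ with hsdef
  have hs0 : s 0 = 0 := by
    apply Subtype.ext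
    show min (2 * (t (Fin.castLE hle' 0) : ℝ)) 1 = 0
    have e : Fin.castLE hle' (0 : Fin (m+1)) = (0 : Fin (n+1)) := rfl
    rw [e, ht0]
    norm_num
  have hklast : Fin.castLE hle' (Fin.last m) = k := Fin.ext rfl
  have hslast : s (Fin.last m) = 1 := by
    apply Subtype.ext
    show min (2 * (t (Fin.castLE hle' (Fin.last m)) : ℝ)) 1 = 1
    rw [hklast]
    exact min_eq_right (by linarith)
  have hsval_lt : ∀ j : Fin (m+1), j.val < m → (t (Fin.castLE hle' j) : ℝ) < 1/2 := by
    intro j hj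
    refine hlt _ ?_
    rw [Fin.lt_def, Fin.coe_castLE]
    exact hj
  have hsmono : StrictMono s := by
    intro j j' hjj'
    rw [← Subtype.coe_lt_coe]
    show min (2 * (t (Fin.castLE hle' j) : ℝ)) 1 < min (2 * (t (Fin.castLE hle' j') : ℝ)) 1
    have hj : j.val < m := lt_of_lt_of_le hjj' (Nat.lt_succ_iff.mp j'.isLt)
    have h1 : (t (Fin.castLE hle' j) : ℝ) < 1/2 := hsval_lt j hj
    rw [min_eq_left (by linarith)]
    by_cases hj' : j'.val < m
    · have h2 : (t (Fin.castLE hle' j') : ℝ) < 1/2 := hsval_lt j' hj'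
      have h3 : t (Fin.castLE hle' j) < t (Fin.castLE hle' j') := by
        refine hmono ?_
        rw [Fin.lt_def, Fin.coe_castLE, Fin.coe_castLE]
        exact hjj'
      rw [← Subtype.coe_lt_coe] at h3
      exact lt_min (by linarith) (by linarith)
    · have hj'eq : j' = Fin.last m := Fin.ext (by simp only [Fin.val_last]; omega)
      rw [hj'eq, hklast, min_eq_right (by linarith)]
      linarith
  have hsub' : ∀ j : Fin m,
      g '' Set.Icc (s j.castSucc) (s j.succ) ⊆ U ⟨j.val, lt_of_lt_of_le j.isLt hmn⟩ := by
    rintro j _ ⟨p, hp, rfl⟩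
    rw [Set.mem_Icc, ← Subtype.coe_le_coe, ← Subtype.coe_le_coe] at hp
    have hjm : (j.castSucc : Fin (m+1)).val < m := j.isLt
    have htj : (t (Fin.castLE hle' j.castSucc) : ℝ) < 1/2 := hsval_lt j.castSucc hjm
    have hlow : min (2 * (t (Fin.castLE hle' j.castSucc) : ℝ)) 1 ≤ (p:ℝ) := hp.1
    rw [min_eq_left (by linarith)] at hlow
    have hupp : (p:ℝ) ≤ min (2 * (t (Fin.castLE hle' j.succ) : ℝ)) 1 := hp.2
    have hupp1 : (p:ℝ) ≤ 2 * (t (Fin.castLE hle' j.succ) : ℝ) :=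
      le_trans hupp (min_le_left _ _)
    set τ : I := ⟨(p:ℝ)/2, ⟨by have := p.2.1; linarith, by have := p.2.2; linarith⟩⟩ with hτdef
    set i : Fin n := ⟨j.val, lt_of_lt_of_le j.isLt hmn⟩ with hidef
    have hic : (i.castSucc : Fin (n+1)) = Fin.castLE hle' j.castSucc := Fin.ext rfl
    have his : (i.succ : Fin (n+1)) = Fin.castLE hle' j.succ := Fin.ext rfl
    have hτmem : τ ∈ Set.Icc (t i.castSucc) (t i.succ) := by
      rw [Set.mem_Icc, ← Subtype.coe_le_coe, ← Subtype.coe_le_coe, hic, his]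
      constructor
      · show (t _ : ℝ) ≤ (p:ℝ)/2
        linarith
      · show (p:ℝ)/2 ≤ (t _ : ℝ)
        linarith
    have hin := hsub i ⟨τ, hτmem, rfl⟩
    rw [Path.trans_apply, dif_pos (show (τ:ℝ) ≤ 1/2 by
      have := p.2.2; show (p:ℝ)/2 ≤ 1/2; linarith)] at hin
    convert hin using 2
    apply Subtype.ext
    show (p:ℝ) = 2 * ((p:ℝ)/2)
    ring
  obtain ⟨γ', hγU, hγpt, hγf⟩ := hcl m s hs0 hslast hsmono
    (fun j => U ⟨j.val, lt_of_lt_of_le j.isLt hmn⟩)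
    (fun j => hU _) hsub'
  have hend : ∀ q : I, (q:ℝ) = 1 → γ' q = g q := by
    intro q hq
    have : q = 1 := Subtype.ext hq
    rw [this, Path.target, Path.target]
  refine ⟨γ'.trans c, ?_, ?_, Path.Homotopic.hcomp hγf (Path.Homotopic.refl c)⟩
  · rintro i _ ⟨τ, hτ, rfl⟩
    rw [Set.mem_Icc] at hτ
    have hin := hsub i ⟨τ, Set.mem_Icc.mpr hτ, rfl⟩
    have hl := hτ.1; rw [← Subtype.coe_le_coe] at hl
    have hr := hτ.2; rw [← Subtype.coe_le_coe] at hr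
    rw [Path.trans_apply]
    rw [Path.trans_apply] at hin
    split_ifs with hle
    · rw [dif_pos hle] at hin
      by_cases hik : i.val < m
      · refine hγU ⟨i.val, hik⟩ ⟨⟨2*(τ:ℝ), ⟨by have := τ.2.1; linarith, by linarith⟩⟩, ?_, rfl⟩
        rw [Set.mem_Icc, ← Subtype.coe_le_coe, ← Subtype.coe_le_coe]
        have hic : Fin.castLE hle' (Fin.castSucc ⟨i.val, hik⟩) = (i.castSucc : Fin (n+1)) :=
          Fin.ext rfl
        have his : Fin.castLE hle' (Fin.succ ⟨i.val, hik⟩) = (i.succ : Fin (n+1)) :=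
          Fin.ext rfl
        constructor
        · show min (2 * (t (Fin.castLE hle' _) : ℝ)) 1 ≤ 2*(τ:ℝ)
          refine le_trans (min_le_left _ _) ?_
          rw [hic]
          linarith
        · show 2*(τ:ℝ) ≤ min (2 * (t (Fin.castLE hle' _) : ℝ)) 1
          refine le_min ?_ (by linarith)
          rw [his]
          linarith
      · have hki : k ≤ i.castSucc := by
          rw [Fin.le_def]
          simp only [Fin.coe_castSucc]
          omega
        have h1 : (1:ℝ)/2 ≤ (t i.castSucc : ℝ) := by
          refine le_trans hk_half ?_
          exact_mod_cast Subtype.coe_le_coe.mpr (hmono.monotone hki)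
        have hτhalf : (τ:ℝ) = 1/2 := le_antisymm hle (by linarith)
        rw [hend _ (show (2:ℝ) * (τ:ℝ) = 1 by rw [hτhalf]; norm_num)]
        exact hin
    · rw [dif_neg hle] at hin
      exact hin
  · intro i
    rw [Path.trans_apply, Path.trans_apply]
    split_ifs with hle
    · have him : i.val < m + 1 := by
        by_contra hc
        push_neg at hc
        have hki : k < i := by rw [Fin.lt_def]; omega
        have h2 := hmono hki
        rw [← Subtype.coe_lt_coe] at h2
        linarith
      have hidx : Fin.castLE hle' ⟨i.val, him⟩ = i := Fin.ext rfl
      have hpt := hγpt ⟨i.val, him⟩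
      have e : s ⟨i.val, him⟩ = ⟨2 * (t i : ℝ), by have h1 := (t i).2.1; exact ⟨by linarith, by linarith⟩⟩ := by
        apply Subtype.ext
        show min (2 * (t (Fin.castLE hle' ⟨i.val, him⟩) : ℝ)) 1 = 2 * (t i : ℝ)
        rw [hidx]
        exact min_eq_left (by linarith)
      rw [e] at hpt
      convert hpt using 2
    · rfl

end AuxLemmas

open Pointwise in
/-- for a subgroup `H` of `π₁(X, x)`, `π_H^qs(X, x) = H · π₁^qs(X, x)`. -/
theorem stmt7 (x : X) (H : Subgroup (FundamentalGroup X x)) :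
    qsSet x ↑H = (H : Set (FundamentalGroup X x)) * qs x := by
  ext p
  constructor
  · rintro ⟨f, h, hfp, hH, hcl⟩
    rw [Set.mem_mul]
    refine ⟨pathClass h, hH, pathClass (f.trans h.symm), ?_, ?_⟩
    · refine ⟨f.trans h.symm, h.trans h.symm, rfl, ?_, hcl.transRight h.symm⟩
      show pathClass (h.trans h.symm) ∈ (⊥ : Subgroup (FundamentalGroup X x))
      rw [Subgroup.mem_bot, ← pathClass_one' (x := x)]
      exact (pathClass_congr' ⟨Path.Homotopy.reflTransSymm h⟩).symm
    · rw [pathClass_trans', ← mul_assoc, pathClass_mul_symm', one_mul]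
      exact hfp
  · rw [Set.mem_mul]
    rintro ⟨u, hu, v, ⟨f, h', hfv, hh', hcl⟩, rfl⟩
    obtain ⟨A, hA⟩ := pathClass_surj' u
    have hh'1 : pathClass h' = 1 := Subgroup.mem_bot.mp hh'
    refine ⟨f.trans A, h'.trans A, ?_, ?_, hcl.transRight A⟩
    · rw [pathClass_trans', hA, hfv]
    · rw [pathClass_trans', hA, hh'1, mul_one]
      exact hu
end
end

section
/- Let φ : (X, x) → (Y, y) be a continuous map of pointed topological spaces and let H be a subset of π₁(X, x). Then the induced homomorphism φ_* : π₁(X, x) → π₁(Y, y), φ_*([f]) = [φ∘f], maps π_H^qs(X, x) into π_{φ_*(H)}^qs(Y, y). -/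
open unitInterval

noncomputable section

attribute [local instance] Path.Homotopic.setoid

variable {X Y : Type*} [TopologicalSpace X] [TopologicalSpace Y]

lemma pathClass_eq_iff {x : X} {f g : Path x x} :
    pathClass f = pathClass g ↔ f.Homotopic g := by
  constructor
  · intro h
    have : (⟦f⟧ : Path.Homotopic.Quotient x x) = ⟦g⟧ := h
    exact Quotient.exact this
  · intro h
    unfold pathClass
    rw [Quotient.sound (s := Path.Homotopic.setoid x x) h]

/-- a continuous map `φ : (X, x) → (Y, φ x)` sends `π_H^qs(X, x)` into
`π_{φ_*(H)}^qs(Y, φ x)`. -/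
theorem stmt11 {φ : X → Y} (hφ : Continuous φ) (x : X) (H : Set (FundamentalGroup X x)) :
    ∀ f : Path x x, pathClass f ∈ qsSet x H →
      pathClass (f.map hφ) ∈
        qsSet (φ x) { q | ∃ h : Path x x, pathClass h ∈ H ∧ q = pathClass (h.map hφ) } := by
  rintro f ⟨f', h, hf', hH, hclose⟩
  refine ⟨f'.map hφ, h.map hφ, ?_, ⟨h, hH, rfl⟩, ?_⟩
  · exact pathClass_eq_iff.mpr (Path.Homotopic.map (pathClass_eq_iff.mp hf') ⟨φ, hφ⟩)
  · intro n t ht0 ht1 htmono U hUopen hcov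
    obtain ⟨γ, hγU, hγt, hγhom⟩ := hclose n t ht0 ht1 htmono (fun i => φ ⁻¹' U i)
      (fun i => (hUopen i).preimage hφ)
      (fun i => by
        rintro a ⟨s, hs, rfl⟩
        exact hcov i ⟨s, hs, rfl⟩)
    refine ⟨γ.map hφ, ?_, ?_, Path.Homotopic.map hγhom ⟨φ, hφ⟩⟩
    · rintro i y ⟨s, hs, rfl⟩
      exact hγU i ⟨s, hs, rfl⟩
    · intro i
      show φ (γ (t i)) = φ (h (t i))
      rw [hγt i]
end
end
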